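/- Let P_n = Conv({±e_i : i ∈ [n]}) ⊂ ℝⁿ (the cross-polytope), let ψ assign a real weight to each vertex ±e_i, and set w_i = ψ(e_i) + ψ(−e_i). Assume w_1 ≤ w_2 ≤ ⋯ ≤ w_n. Then the regular subdivision of P_n induced by ψ (given by the lower convex hull of the lifted points) contains the internal edge from e_1 to −e_1 if and only if w_1 < w_2. -/

import Mathlib

open Finset

/-- The 0/1 indicator vector `e_I ∈ ℝⁿ` of a subset `I ⊆ [n]`. -/
def eInd {n : ℕ} (I : Finset (Fin n)) : Fin n → ℝ := fun i => if i ∈ I then 1 else 0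

/-- The minimum of `f` over the finite set `s` is attained at least twice. -/
def MinTwiceOn {α : Type*} [DecidableEq α] (s : Finset α) (f : α → ℝ) : Prop :=
  ∃ a ∈ s, ∃ b ∈ s, a ≠ b ∧ f a = f b ∧ ∀ c ∈ s, f a ≤ f c

/-- The minimum of the three reals `a`, `b`, `c` is attained at least twice. -/
def ThreeMinTwice (a b c : ℝ) : Prop :=
  (a = b ∧ a ≤ c) ∨ (a = c ∧ a ≤ b) ∨ (b = c ∧ b ≤ a)

/-- `x` is a tropical Plücker vector of rank `d` on `[n]`: for every `S` of size `d-2`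
and distinct `i,j,k,l ∉ S`, the minimum of the three pairwise sums is attained twice. -/
def TropPlucker (n d : ℕ) (x : Finset (Fin n) → ℝ) : Prop :=
  ∀ (S : Finset (Fin n)) (i j k l : Fin n),
    S.card = d - 2 → i ∉ S → j ∉ S → k ∉ S → l ∉ S →
    i ≠ j → i ≠ k → i ≠ l → j ≠ k → j ≠ l → k ≠ l →
    ThreeMinTwice
      (x (S ∪ {i, j}) + x (S ∪ {k, l}))
      (x (S ∪ {i, k}) + x (S ∪ {j, l}))
      (x (S ∪ {i, l}) + x (S ∪ {j, k}))

/-- The linear functional on `ℝⁿ` with covector `a`. -/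
def lin {n : ℕ} (a : Fin n → ℝ) (z : Fin n → ℝ) : ℝ := ∑ i, a i * z i

/-- `[u,v]` is an edge of the polytope with (finite) vertex set `V`: some linear
functional attains its maximum over `V` exactly at `u` and `v`, `u ≠ v`. -/
def IsEdge {n : ℕ} (V : Set (Fin n → ℝ)) (u v : Fin n → ℝ) : Prop :=
  u ∈ V ∧ v ∈ V ∧ u ≠ v ∧
  ∃ a : Fin n → ℝ, (∀ z ∈ V, lin a z ≤ lin a u) ∧ lin a u = lin a v ∧
    ∀ z ∈ V, lin a z = lin a u → z = u ∨ z = v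

/-- `[u,v]` is a 1-cell of the regular subdivision of the polytope with vertex set `V`
induced by the weights `w`: some affine functional `z ↦ lin a z + c` is dominated by `w`
on `V` and touches `w` exactly at `u` and `v`, `u ≠ v`. -/
def IsCellEdge {n : ℕ} (V : Set (Fin n → ℝ)) (w : (Fin n → ℝ) → ℝ)
    (u v : Fin n → ℝ) : Prop :=
  u ∈ V ∧ v ∈ V ∧ u ≠ v ∧
  ∃ (a : Fin n → ℝ) (c : ℝ), (∀ z ∈ V, lin a z + c ≤ w z) ∧
    lin a u + c = w u ∧ lin a v + c = w v ∧
    ∀ z ∈ V, lin a z + c = w z → z = u ∨ z = v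

/-- The vertex set of `Δ(p,q;n)`: all indicator vectors `e_K` with `|K| ∈ {p,q}`. -/
def DeltaVerts (n p q : ℕ) : Set (Fin n → ℝ) :=
  {v | ∃ K : Finset (Fin n), (K.card = p ∨ K.card = q) ∧ v = eInd K}

/-- The vertex set of the face `Δ_{S,T}`: the vectors `e_{S∪{i}}` and `e_{T∖{i}}`
for `i ∈ T∖S`. -/
def DeltaSTVerts {n : ℕ} (S T : Finset (Fin n)) : Set (Fin n → ℝ) :=
  {v | ∃ i ∈ T \ S, v = eInd (insert i S) ∨ v = eInd (T.erase i)}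

/-- The vertex set of the cross-polytope `P_n`: `{±e_i : i ∈ [n]}`. -/
def CrossVerts (n : ℕ) : Set (Fin n → ℝ) :=
  {v | ∃ i : Fin n, v = eInd {i} ∨ v = -(eInd {i})}

/-- `M'` is a quotient of `M` (the matroids are concordant):
every flat of `M'` is a flat of `M`. -/
def MatroidQuotient {α : Type*} (M' M : Matroid α) : Prop :=
  ∀ F : Set α, M'.IsFlat F → M.IsFlat F

lemma lin_eInd {n : ℕ} (a : Fin n → ℝ) (i : Fin n) : lin a (eInd {i}) = a i := by
  simp [lin, eInd]

lemma lin_neg_eInd {n : ℕ} (a : Fin n → ℝ) (i : Fin n) : lin a (-(eInd {i})) = -a i := by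
  simp [lin, eInd, mul_ite]

lemma eInd_ne_neg {n : ℕ} (i j : Fin n) : eInd {i} ≠ -(eInd {j}) := by
  intro h
  have := congrFun h i
  simp only [eInd, Pi.neg_apply, Finset.mem_singleton, if_pos rfl] at this
  rcases eq_or_ne i j with rfl | hij
  · simp at this; linarith
  · simp [hij] at this

lemma eInd_inj {n : ℕ} {i j : Fin n} (h : eInd {i} = eInd {j}) : i = j := by
  by_contra hij
  have := congrFun h i
  simp [eInd, hij] at this

/-- for weights `ψ⁺, ψ⁻` on the vertices `±e_i` of the cross-polytope `P_n`
with `w_i = ψ⁺_i + ψ⁻_i` nondecreasing, the regular subdivision induced by the weights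
contains the internal edge `[e_1, -e_1]` iff `w_1 < w_2`. -/
theorem statement2 (n : ℕ) (hn : 2 ≤ n) (ψp ψn : Fin n → ℝ)
    (hmono : ∀ i j : Fin n, i ≤ j → ψp i + ψn i ≤ ψp j + ψn j)
    (W : (Fin n → ℝ) → ℝ)
    (hWp : ∀ i : Fin n, W (eInd {i}) = ψp i)
    (hWn : ∀ i : Fin n, W (-(eInd {i})) = ψn i) :
    IsCellEdge (CrossVerts n) W (eInd {⟨0, by omega⟩}) (-(eInd {⟨0, by omega⟩})) ↔
      ψp ⟨0, by omega⟩ + ψn ⟨0, by omega⟩ < ψp ⟨1, by omega⟩ + ψn ⟨1, by omega⟩ := by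
  set i0 : Fin n := ⟨0, by omega⟩ with hi0
  set i1 : Fin n := ⟨1, by omega⟩ with hi1
  constructor
  · rintro ⟨-, -, -, a, c, hle, hequ, heqv, honly⟩
    rw [lin_eInd, hWp] at hequ
    rw [lin_neg_eInd, hWn] at heqv
    have h1p : lin a (eInd {i1}) + c ≤ W (eInd {i1}) :=
      hle _ ⟨i1, Or.inl rfl⟩
    rw [lin_eInd, hWp] at h1p
    have h1ps : a i1 + c ≠ ψp i1 := by
      intro heq
      rcases honly (eInd {i1}) ⟨i1, Or.inl rfl⟩ (by rw [lin_eInd, hWp]; exact heq) with h | h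
      · exact absurd (eInd_inj h) (by simp [hi0, hi1, Fin.ext_iff])
      · exact eInd_ne_neg i1 i0 h
    have h1n : lin a (-(eInd {i1})) + c ≤ W (-(eInd {i1})) :=
      hle _ ⟨i1, Or.inr rfl⟩
    rw [lin_neg_eInd, hWn] at h1n
    have h1ns : -a i1 + c ≠ ψn i1 := by
      intro heq
      rcases honly (-(eInd {i1})) ⟨i1, Or.inr rfl⟩
          (by rw [lin_neg_eInd, hWn]; exact heq) with h | h
      · exact eInd_ne_neg i0 i1 h.symm
      · have := congrFun h i0
        simp [eInd, hi0, hi1, Fin.ext_iff] at this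
    have hlt1 : a i1 + c < ψp i1 := lt_of_le_of_ne h1p h1ps
    have hlt2 : -a i1 + c < ψn i1 := lt_of_le_of_ne h1n h1ns
    linarith
  · intro hlt
    refine ⟨⟨i0, Or.inl rfl⟩, ⟨i0, Or.inr rfl⟩, eInd_ne_neg i0 i0,
      (fun i => (ψp i - ψn i) / 2), (ψp i0 + ψn i0) / 2, ?_, ?_, ?_, ?_⟩
    · rintro z ⟨i, rfl | rfl⟩
      · rw [lin_eInd, hWp]
        have : ψp i0 + ψn i0 ≤ ψp i + ψn i := hmono i0 i (by simp [hi0, Fin.le_def])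
        linarith
      · rw [lin_neg_eInd, hWn]
        have : ψp i0 + ψn i0 ≤ ψp i + ψn i := hmono i0 i (by simp [hi0, Fin.le_def])
        linarith
    · rw [lin_eInd, hWp]; ring
    · rw [lin_neg_eInd, hWn]; ring
    · rintro z ⟨i, rfl | rfl⟩ heq
      · rw [lin_eInd, hWp] at heq
        rcases eq_or_ne i i0 with rfl | hne
        · exact Or.inl rfl
        · exfalso
          have h1i : ψp i1 + ψn i1 ≤ ψp i + ψn i := by
            refine hmono i1 i ?_
            simp only [Fin.le_def, hi1]
            have : (i : ℕ) ≠ 0 := fun h => hne (by simp [hi0, Fin.ext_iff, h])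
            omega
          linarith
      · rw [lin_neg_eInd, hWn] at heq
        rcases eq_or_ne i i0 with rfl | hne
        · exact Or.inr rfl
        · exfalso
          have h1i : ψp i1 + ψn i1 ≤ ψp i + ψn i := by
            refine hmono i1 i ?_
            simp only [Fin.le_def, hi1]
            have : (i : ℕ) ≠ 0 := fun h => hne (by simp [hi0, Fin.ext_iff, h])
            omega
          linarith
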